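/- For any simple graph G on n vertices with maximum degree d_1, the independence number α(G) satisfies α(G) ≤ m_G[0, d_1], the number of signless Laplacian eigenvalues of G in the interval [0, d_1]. -/

import Mathlib

open Finset
open scoped Classical

/-- The signless Laplacian matrix `Q(G) = D(G) + A(G)` of a simple graph. -/
noncomputable def sLap {V : Type*} [Fintype V] [DecidableEq V] (G : SimpleGraph V) :
    Matrix V V ℝ :=
  Matrix.diagonal (fun v => (G.degree v : ℝ)) + G.adjMatrix ℝ

/-- Number of eigenvalues (with multiplicity) of a Hermitian matrix lying in a set. -/
noncomputable def eigCount {V : Type*} [Fintype V] [DecidableEq V]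
    {M : Matrix V V ℝ} (hM : M.IsHermitian) (s : Set ℝ) : ℕ :=
  (Finset.univ.filter fun i => hM.eigenvalues i ∈ s).card

section Aux
open Matrix

variable {n : ℕ} (G : SimpleGraph (Fin n))

lemma sLap_rowsum (u : Fin n) : ∑ v, G.adjMatrix ℝ u v = (G.degree u : ℝ) := by
  simp [SimpleGraph.adjMatrix_apply, Finset.sum_boole, SimpleGraph.degree,
    SimpleGraph.neighborFinset_eq_filter]

lemma sLap_transpose : (sLap G)ᵀ = sLap G := by
  ext i j
  by_cases h : i = j
  · subst h; rfl
  · simp [sLap, Matrix.diagonal_apply_ne, h, Ne.symm h, SimpleGraph.adjMatrix_apply,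
      G.adj_comm]

lemma sLap_quad (x : Fin n → ℝ) :
    x ⬝ᵥ (sLap G *ᵥ x) =
      ∑ u, (G.degree u : ℝ) * x u ^ 2 + ∑ u, ∑ v, G.adjMatrix ℝ u v * (x u * x v) := by
  simp only [sLap, dotProduct, Matrix.mulVec, Finset.mul_sum]
  have hsplit : ∀ u v, x u * ((Matrix.diagonal (fun w => (G.degree w : ℝ)) +
      G.adjMatrix ℝ) u v * x v) =
      x u * (Matrix.diagonal (fun w => (G.degree w : ℝ)) u v * x v) +
        G.adjMatrix ℝ u v * (x u * x v) := by
    intro u v; rw [Matrix.add_apply]; ring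
  simp_rw [hsplit, Finset.sum_add_distrib]
  congr 1
  apply Finset.sum_congr rfl; intro u _
  rw [Finset.sum_eq_single u]
  · simp [Matrix.diagonal_apply_eq]; ring
  · intro v _ hv
    rw [Matrix.diagonal_apply_ne _ (Ne.symm hv)]; ring
  · intro h; exact absurd (Finset.mem_univ u) h

lemma sLap_posSemidef : (sLap G).PosSemidef := by
  rw [Matrix.posSemidef_iff_dotProduct_mulVec]
  constructor
  · have h := sLap_transpose G
    unfold Matrix.IsHermitian
    rw [Matrix.conjTranspose]
    rw [h]; ext i j; simp
  · intro x
    have hstar : star x = x := rfl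
    rw [hstar]
    have key : x ⬝ᵥ (sLap G *ᵥ x) =
        (∑ u, ∑ v, G.adjMatrix ℝ u v * (x u + x v) ^ 2) / 2 := by
      rw [sLap_quad]
      have expand : ∀ u v, G.adjMatrix ℝ u v * (x u + x v) ^ 2 =
          G.adjMatrix ℝ u v * x u ^ 2 + 2 * (G.adjMatrix ℝ u v * (x u * x v)) +
            G.adjMatrix ℝ u v * x v ^ 2 := by intro u v; ring
      simp only [expand, Finset.sum_add_distrib]
      have h1 : ∑ u, ∑ v, G.adjMatrix ℝ u v * x u ^ 2 = ∑ u, (G.degree u : ℝ) * x u ^ 2 := by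
        apply Finset.sum_congr rfl; intro u _
        rw [← Finset.sum_mul, sLap_rowsum]
      have h2 : ∑ u, ∑ v, G.adjMatrix ℝ u v * x v ^ 2 = ∑ v, (G.degree v : ℝ) * x v ^ 2 := by
        rw [Finset.sum_comm]
        apply Finset.sum_congr rfl; intro v _
        have : ∀ u, G.adjMatrix ℝ u v = G.adjMatrix ℝ v u := by
          intro u; simp [SimpleGraph.adjMatrix_apply, G.adj_comm]
        simp_rw [this]
        rw [← Finset.sum_mul, sLap_rowsum]
      rw [h1, h2]
      simp_rw [← Finset.mul_sum]
      ring
    rw [key]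
    apply div_nonneg _ (by norm_num)
    apply Finset.sum_nonneg; intro u _
    apply Finset.sum_nonneg; intro v _
    apply mul_nonneg _ (sq_nonneg _)
    simp [SimpleGraph.adjMatrix_apply]
    positivity

/-- repr coefficients vanish off `T` for elements of the span of basis vectors in `T`. -/
lemma repr_zero_of_mem_span {E : Type*} [NormedAddCommGroup E] [InnerProductSpace ℝ E]
    (b : OrthonormalBasis (Fin n) ℝ E) (T : Finset (Fin n)) {x : E}
    (hx : x ∈ Submodule.span ℝ (b '' ↑T)) {i : Fin n} (hi : i ∉ T) :
    b.repr x i = 0 := by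
  rw [b.repr_apply_apply]
  induction hx using Submodule.span_induction with
  | mem y hy =>
    obtain ⟨j, hj, rfl⟩ := hy
    have hij : i ≠ j := fun h => hi (h ▸ hj)
    exact b.orthonormal.2 hij
  | zero => simp
  | add y z _ _ hy hz => rw [inner_add_right, hy, hz, add_zero]
  | smul a y _ hy => rw [inner_smul_right, hy, mul_zero]

lemma finrank_span_onb {E : Type*} [NormedAddCommGroup E] [InnerProductSpace ℝ E]
    (b : OrthonormalBasis (Fin n) ℝ E) (T : Finset (Fin n)) :
    Module.finrank ℝ (Submodule.span ℝ (b '' ↑T)) = T.card := by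
  have hli : LinearIndependent ℝ (fun i : T => b i) :=
    b.orthonormal.linearIndependent.comp _ Subtype.val_injective
  have himg : (b '' ↑T : Set E) = Set.range (fun i : T => b i) := by
    rw [Set.image_eq_range]; rfl
  rw [himg, finrank_span_eq_card hli, Fintype.card_coe]

end Aux

open Matrix in
open scoped RealInnerProductSpace in
theorem stmt5 {n : ℕ} (G : SimpleGraph (Fin n)) (hQ : (sLap G).IsHermitian)
    (S : Finset (Fin n)) (hS : ∀ a ∈ S, ∀ b ∈ S, ¬ G.Adj a b) :
    S.card ≤ eigCount hQ (Set.Icc (0 : ℝ) (G.maxDegree : ℝ)) := by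
  classical
  by_contra hlt
  push_neg at hlt
  set Δ : ℝ := (G.maxDegree : ℝ) with hΔ
  set c := eigCount hQ (Set.Icc (0 : ℝ) Δ) with hc
  set ev := hQ.eigenvalues with hev
  set B := hQ.eigenvectorBasis with hBdef
  set T : Finset (Fin n) := univ.filter (fun i => ev i ∉ Set.Icc (0 : ℝ) Δ) with hT
  have hcT : c + T.card = n := by
    have h := Finset.card_filter_add_card_filter_not
      (s := (univ : Finset (Fin n))) (p := fun i => ev i ∈ Set.Icc (0 : ℝ) Δ)
    simpa [hc, eigCount, hT] using h
  have hpsd := sLap_posSemidef G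
  have hgt : ∀ i ∈ T, Δ < ev i := by
    intro i hi
    simp only [hT, Finset.mem_filter, Set.mem_Icc, not_and_or, not_le] at hi
    rcases hi.2 with h | h
    · exact absurd (hpsd.eigenvalues_nonneg i) (not_le.mpr h)
    · exact h
  set U : Submodule ℝ (EuclideanSpace ℝ (Fin n)) :=
    Submodule.span ℝ ((EuclideanSpace.basisFun (Fin n) ℝ) '' ↑S) with hU
  set W : Submodule ℝ (EuclideanSpace ℝ (Fin n)) := Submodule.span ℝ (⇑B '' ↑T) with hW
  have hUr : Module.finrank ℝ U = S.card := finrank_span_onb _ _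
  have hWr : Module.finrank ℝ W = T.card := finrank_span_onb _ _
  have hUW : (U ⊓ W) ≠ ⊥ := by
    intro hbot
    have h1 := Submodule.finrank_sup_add_finrank_inf_eq U W
    rw [hbot, finrank_bot, add_zero, hUr, hWr] at h1
    have h2 : Module.finrank ℝ ↥(U ⊔ W) ≤ n := by
      have h3 := Submodule.finrank_le (U ⊔ W)
      rwa [finrank_euclideanSpace_fin] at h3
    omega
  obtain ⟨x, hxUW, hx0⟩ := Submodule.exists_mem_ne_zero_of_ne_bot hUW
  obtain ⟨hxU, hxW⟩ := Submodule.mem_inf.mp hxUW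
  have hsupp : ∀ v, v ∉ S → (x : Fin n → ℝ) v = 0 := by
    intro v hv
    have h := repr_zero_of_mem_span (EuclideanSpace.basisFun (Fin n) ℝ) S hxU hv
    simpa [EuclideanSpace.basisFun_repr] using h
  have hreprT : ∀ i, i ∉ T → B.repr x i = 0 := fun i hi => repr_zero_of_mem_span B T hxW hi
  have hinner : ∀ a b : EuclideanSpace ℝ (Fin n), ⟪a, b⟫ = (a : Fin n → ℝ) ⬝ᵥ (b : Fin n → ℝ) := by
    intro a b
    simp [PiLp.inner_apply, RCLike.inner_apply, dotProduct]
    exact Finset.sum_congr rfl fun _ _ => mul_comm _ _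
  have hreprQ : ∀ (y : EuclideanSpace ℝ (Fin n)) (i : Fin n),
      B.repr (WithLp.toLp 2 (sLap G *ᵥ y)) i = ev i * B.repr y i := by
    intro y i
    rw [B.repr_apply_apply, B.repr_apply_apply, hinner, hinner, WithLp.ofLp_toLp]
    rw [Matrix.dotProduct_mulVec]
    have hvm : (B i : Fin n → ℝ) ᵥ* sLap G = sLap G *ᵥ (B i : Fin n → ℝ) := by
      conv_lhs => rw [← sLap_transpose G]
      rw [Matrix.vecMul_transpose]
    have hm : sLap G *ᵥ (B i : Fin n → ℝ) = ev i • (B i : Fin n → ℝ) :=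
      hQ.mulVec_eigenvectorBasis i
    rw [hvm, hm, smul_dotProduct]
    simp [hev, hBdef, smul_eq_mul]
  have hq_eig : ∀ y : EuclideanSpace ℝ (Fin n),
      (y : Fin n → ℝ) ⬝ᵥ (sLap G *ᵥ y) = ∑ i, ev i * (B.repr y i) ^ 2 := by
    intro y
    have h1 : (y : Fin n → ℝ) ⬝ᵥ (sLap G *ᵥ y) =
        ⟪y, (WithLp.toLp 2 (sLap G *ᵥ y))⟫ := (hinner y (WithLp.toLp 2 (sLap G *ᵥ y))).symm
    rw [h1, ← B.repr.inner_map_map y (WithLp.toLp 2 (sLap G *ᵥ y)),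
      hinner]
    simp only [dotProduct]
    apply Finset.sum_congr rfl
    intro i _
    rw [hreprQ y i]; ring
  have hnorm_eig : ∀ y : EuclideanSpace ℝ (Fin n),
      (y : Fin n → ℝ) ⬝ᵥ (y : Fin n → ℝ) = ∑ i, (B.repr y i) ^ 2 := by
    intro y
    rw [← hinner y y, ← B.repr.inner_map_map y y, hinner]
    simp only [dotProduct]
    apply Finset.sum_congr rfl
    intro i _; ring
  have hq : (x : Fin n → ℝ) ⬝ᵥ (sLap G *ᵥ x) = ∑ i ∈ T, ev i * (B.repr x i) ^ 2 := by
    rw [hq_eig]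
    symm
    apply Finset.sum_subset (Finset.subset_univ T)
    intro i _ hi
    rw [hreprT i hi]; ring
  have hnorm2 : (x : Fin n → ℝ) ⬝ᵥ (x : Fin n → ℝ) = ∑ i ∈ T, (B.repr x i) ^ 2 := by
    rw [hnorm_eig]
    symm
    apply Finset.sum_subset (Finset.subset_univ T)
    intro i _ hi
    rw [hreprT i hi]; ring
  have hex : ∃ i ∈ T, B.repr x i ≠ 0 := by
    by_contra h
    push_neg at h
    apply hx0
    have hall : B.repr x = 0 := by
      ext i
      by_cases hi : i ∈ T
      · exact h i hi
      · exact hreprT i hi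
    have := congrArg B.repr.symm hall
    simpa using this
  have hlow : Δ * ((x : Fin n → ℝ) ⬝ᵥ (x : Fin n → ℝ)) < (x : Fin n → ℝ) ⬝ᵥ (sLap G *ᵥ x) := by
    rw [hq, hnorm2, Finset.mul_sum]
    apply Finset.sum_lt_sum
    · intro i hi
      exact mul_le_mul_of_nonneg_right (le_of_lt (hgt i hi)) (sq_nonneg _)
    · obtain ⟨i0, hi0T, hi0⟩ := hex
      refine ⟨i0, hi0T, ?_⟩
      have : (0 : ℝ) < (B.repr x i0) ^ 2 := by positivity
      exact mul_lt_mul_of_pos_right (hgt i0 hi0T) this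
  have hupp : (x : Fin n → ℝ) ⬝ᵥ (sLap G *ᵥ x) ≤ Δ * ((x : Fin n → ℝ) ⬝ᵥ (x : Fin n → ℝ)) := by
    rw [sLap_quad]
    have hzero : ∑ u, ∑ v, G.adjMatrix ℝ u v * ((x : Fin n → ℝ) u * (x : Fin n → ℝ) v) = 0 := by
      apply Finset.sum_eq_zero; intro u _
      apply Finset.sum_eq_zero; intro v _
      by_cases hu : u ∈ S
      · by_cases hv : v ∈ S
        · simp [SimpleGraph.adjMatrix_apply, hS u hu v hv]
        · rw [hsupp v hv]; ring
      · rw [hsupp u hu]; ring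
    rw [hzero, add_zero]
    have hdd : (x : Fin n → ℝ) ⬝ᵥ (x : Fin n → ℝ) = ∑ u, (x : Fin n → ℝ) u ^ 2 := by
      simp [dotProduct, sq]
    rw [hdd, Finset.mul_sum]
    apply Finset.sum_le_sum
    intro u _
    apply mul_le_mul_of_nonneg_right _ (sq_nonneg _)
    rw [hΔ]
    exact_mod_cast G.degree_le_maxDegree u
  linarith
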